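/- Let F : X → Y be a shape morphism of topological spaces which has a left inverse, i.e., there is a shape morphism G : Y → X with G ∘ F = 1_X. If sd F ≤ n, then sd X ≤ n. -/

import Mathlib

universe u

noncomputable section

namespace ShapePaper

open CategoryTheory

/-! ### H-maps: morphisms of the homotopy category HTop -/

/-- The setoid of continuous maps up to homotopy. -/
def homotopySetoid (X Y : Type u) [TopologicalSpace X] [TopologicalSpace Y] :
    Setoid C(X, Y) :=
  ⟨ContinuousMap.Homotopic, ContinuousMap.Homotopic.equivalence⟩

/-- An H-map `X → Y` is a homotopy class of continuous maps `X → Y`,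
i.e. a morphism of the homotopy category `HTop`. -/
def HMap (X Y : Type u) [TopologicalSpace X] [TopologicalSpace Y] : Type u :=
  Quotient (homotopySetoid X Y)

variable {X Y Z W : Type u} [TopologicalSpace X] [TopologicalSpace Y]
  [TopologicalSpace Z] [TopologicalSpace W]

/-- The H-map (homotopy class) of a continuous map. -/
def HMap.mk (f : C(X, Y)) : HMap X Y := Quotient.mk (homotopySetoid X Y) f

/-- The identity H-map. -/
protected def HMap.id (X : Type u) [TopologicalSpace X] : HMap X X :=
  HMap.mk (ContinuousMap.id X)

/-- Composition of H-maps. -/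
protected def HMap.comp (g : HMap Y Z) (f : HMap X Y) : HMap X Z :=
  Quotient.liftOn₂ g f (fun g f => HMap.mk (g.comp f))
    (fun _ _ _ _ hg hf => Quotient.sound (ContinuousMap.Homotopic.comp hg hf))

theorem HMap.comp_assoc (h : HMap Z W) (g : HMap Y Z) (f : HMap X Y) :
    HMap.comp (HMap.comp h g) f = HMap.comp h (HMap.comp g f) := by
  induction h using Quotient.inductionOn
  induction g using Quotient.inductionOn
  induction f using Quotient.inductionOn
  rfl

theorem HMap.id_comp (f : HMap X Y) : HMap.comp (HMap.id Y) f = f := by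
  induction f using Quotient.inductionOn
  rfl

theorem HMap.comp_id (f : HMap X Y) : HMap.comp f (HMap.id X) = f := by
  induction f using Quotient.inductionOn
  rfl

/-! ### Polyhedra and the category HPol -/

/-- A realization of the space `P` as (the space of) a simplicial complex. -/
structure PolyhedralRealization (P : Type u) [TopologicalSpace P] where
  /-- the ambient topological real vector space -/
  E : Type u
  [addCommGroup : AddCommGroup E]
  [module : Module ℝ E]
  [topE : TopologicalSpace E]
  /-- the simplicial complex -/
  complex : Geometry.SimplicialComplex ℝ E
  /-- `P` is homeomorphic to the space (carrier) of the complex -/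
  homeo : P ≃ₜ complex.space

attribute [instance] PolyhedralRealization.addCommGroup PolyhedralRealization.module
  PolyhedralRealization.topE

/-- The realization has dimension `≤ n`: every simplex has at most `n + 1` vertices. -/
def PolyhedralRealization.DimLE {P : Type u} [TopologicalSpace P]
    (R : PolyhedralRealization P) (n : ℕ) : Prop :=
  ∀ s ∈ R.complex.faces, s.card ≤ n + 1

/-- `P` is a polyhedron. -/
def IsPolyhedron (P : Type u) [TopologicalSpace P] : Prop :=
  Nonempty (PolyhedralRealization P)

/-- `P` is a polyhedron of dimension `≤ n`. -/
def IsPolyhedronDimLE (P : Type u) [TopologicalSpace P] (n : ℕ) : Prop :=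
  ∃ R : PolyhedralRealization P, R.DimLE n

/-- `X` is an object of `HPol`, i.e. has the homotopy type of a polyhedron. -/
def InHPol (X : Type u) [TopologicalSpace X] : Prop :=
  ∃ (P : Type u) (_ : TopologicalSpace P), IsPolyhedron P ∧
    Nonempty (ContinuousMap.HomotopyEquiv X P)

/-- The H-map `f` factors in `HPol` through some polyhedron of dimension `≤ n`. -/
def HMap.FactorsThruPolyhedronDimLE (f : HMap X Y) (n : ℕ) : Prop :=
  ∃ (P : Type u) (_ : TopologicalSpace P), IsPolyhedronDimLE P n ∧
    ∃ (u : HMap X P) (v : HMap P Y), f = v.comp u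

/-- `X` is homotopy dominated by a polyhedron of dimension `≤ n`. -/
def DominatedByPolyhedronDimLE (X : Type u) [TopologicalSpace X] (n : ℕ) : Prop :=
  ∃ (P : Type u) (_ : TopologicalSpace P), IsPolyhedronDimLE P n ∧
    ∃ (s : HMap X P) (d : HMap P X), d.comp s = HMap.id X

/-! ### Inverse systems in HPol -/

/-- An inverse system in the category `HPol`: a directed index set `Idx`, spaces `obj i`
having the homotopy type of polyhedra, and bonding H-maps. -/
structure InverseSystem : Type (u + 1) where
  /-- the index set -/
  Idx : Type u
  [preorder : Preorder Idx]
  [idxNonempty : Nonempty Idx]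
  directed : ∀ a b : Idx, ∃ c, a ≤ c ∧ b ≤ c
  /-- the terms of the system -/
  obj : Idx → Type u
  [topObj : ∀ i, TopologicalSpace (obj i)]
  inHPol : ∀ i, InHPol (obj i)
  /-- the bonding H-maps -/
  bond : ∀ {i j : Idx}, i ≤ j → HMap (obj j) (obj i)
  bond_refl : ∀ i : Idx, bond (le_refl i) = HMap.id (obj i)
  bond_trans : ∀ {i j k : Idx} (hij : i ≤ j) (hjk : j ≤ k),
    HMap.comp (bond hij) (bond hjk) = bond (hij.trans hjk)

attribute [instance] InverseSystem.preorder InverseSystem.idxNonempty InverseSystem.topObj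

/-- A morphism of inverse systems in `HPol`. -/
structure SysMor (𝓧 𝓨 : InverseSystem.{u}) : Type u where
  /-- the index function `φ` -/
  idxMap : 𝓨.Idx → 𝓧.Idx
  /-- the H-maps `f_μ : X_{φ(μ)} → Y_μ` -/
  hmap : ∀ μ : 𝓨.Idx, HMap (𝓧.obj (idxMap μ)) (𝓨.obj μ)
  coherent : ∀ {μ μ' : 𝓨.Idx} (h : μ ≤ μ'),
    ∃ (l : 𝓧.Idx) (h₁ : idxMap μ ≤ l) (h₂ : idxMap μ' ≤ l),
      (𝓨.bond h).comp ((hmap μ').comp (𝓧.bond h₂)) = (hmap μ).comp (𝓧.bond h₁)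

variable {𝓧 𝓨 𝓩 : InverseSystem.{u}}

/-- `f_{μλ} := f_μ ∘ p_{φ(μ)λ}` for `λ ≥ φ(μ)`. -/
def SysMor.shift (F : SysMor 𝓧 𝓨) (μ : 𝓨.Idx) {l : 𝓧.Idx} (h : F.idxMap μ ≤ l) :
    HMap (𝓧.obj l) (𝓨.obj μ) :=
  (F.hmap μ).comp (𝓧.bond h)

theorem SysMor.shift_comp (F : SysMor 𝓧 𝓨) (μ : 𝓨.Idx) {l l' : 𝓧.Idx}
    (h : F.idxMap μ ≤ l) (h' : l ≤ l') :
    (F.shift μ h).comp (𝓧.bond h') = F.shift μ (h.trans h') := by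
  rw [SysMor.shift, SysMor.shift, HMap.comp_assoc, 𝓧.bond_trans]

/-- Coherence, pushed up to all larger indices. -/
theorem SysMor.coherent' (F : SysMor 𝓧 𝓨) {μ μ' : 𝓨.Idx} (h : μ ≤ μ') :
    ∃ (l : 𝓧.Idx) (h₁ : F.idxMap μ ≤ l) (h₂ : F.idxMap μ' ≤ l),
      ∀ {l' : 𝓧.Idx} (hl : l ≤ l'),
        (𝓨.bond h).comp ((F.hmap μ').comp (𝓧.bond (h₂.trans hl))) =
          (F.hmap μ).comp (𝓧.bond (h₁.trans hl)) := by
  obtain ⟨l, h₁, h₂, heq⟩ := F.coherent h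
  refine ⟨l, h₁, h₂, ?_⟩
  intro l' hl
  have := congrArg (fun t => HMap.comp t (𝓧.bond hl)) heq
  simpa only [HMap.comp_assoc, InverseSystem.bond_trans] using this

/-- The dimension of a morphism of inverse systems is `≤ n`. -/
def SysMor.DimLE (F : SysMor 𝓧 𝓨) (n : ℕ) : Prop :=
  ∀ μ : 𝓨.Idx, ∃ (l : 𝓧.Idx) (h : F.idxMap μ ≤ l),
    (F.shift μ h).FactorsThruPolyhedronDimLE n

/-- The dimension of an inverse system is `≤ n` : every term is homotopy dominated by
a polyhedron of dimension `≤ n`. -/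
def InverseSystem.DimLE (𝓧 : InverseSystem.{u}) (n : ℕ) : Prop :=
  ∀ i : 𝓧.Idx, DominatedByPolyhedronDimLE (𝓧.obj i) n

/-- Equivalence of morphisms of inverse systems. -/
def SysMor.Equiv (F G : SysMor 𝓧 𝓨) : Prop :=
  ∀ μ : 𝓨.Idx, ∃ (l : 𝓧.Idx) (h₁ : F.idxMap μ ≤ l) (h₂ : G.idxMap μ ≤ l),
    F.shift μ h₁ = G.shift μ h₂

/-- A pro-morphism (morphism of pro-HPol) is an equivalence class of morphisms
of inverse systems. -/
def ProMor (𝓧 𝓨 : InverseSystem.{u}) : Type u :=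
  Quot (@SysMor.Equiv 𝓧 𝓨)

/-- The pro-morphism represented by a morphism of inverse systems. -/
def ProMor.mk (F : SysMor 𝓧 𝓨) : ProMor 𝓧 𝓨 := Quot.mk _ F

/-- The dimension of a pro-morphism is `≤ n` if it admits a representative of
dimension `≤ n`. -/
def ProMor.DimLE (f : ProMor 𝓧 𝓨) (n : ℕ) : Prop :=
  ∃ F : SysMor 𝓧 𝓨, ProMor.mk F = f ∧ F.DimLE n

/-- The identity morphism of an inverse system. -/
def SysMor.identity (𝓧 : InverseSystem.{u}) : SysMor 𝓧 𝓧 where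
  idxMap := id
  hmap i := HMap.id (𝓧.obj i)
  coherent := by
    intro μ μ' h
    refine ⟨μ', h, le_refl _, ?_⟩
    show (𝓧.bond h).comp ((HMap.id _).comp (𝓧.bond (le_refl μ'))) =
      (HMap.id _).comp (𝓧.bond h)
    rw [HMap.id_comp, HMap.id_comp, 𝓧.bond_trans]

/-- Composition of morphisms of inverse systems. -/
def SysMor.comp (G : SysMor 𝓨 𝓩) (F : SysMor 𝓧 𝓨) : SysMor 𝓧 𝓩 where
  idxMap := F.idxMap ∘ G.idxMap
  hmap ν := (G.hmap ν).comp (F.hmap (G.idxMap ν))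
  coherent := by
    intro ν ν' h
    obtain ⟨μ, hμ₁, hμ₂, hg⟩ := G.coherent h
    obtain ⟨l₁, h₁₁, h₁₂, hf₁⟩ := F.coherent' hμ₁
    obtain ⟨l₂, h₂₁, h₂₂, hf₂⟩ := F.coherent' hμ₂
    obtain ⟨l, hl₁, hl₂⟩ := 𝓧.directed l₁ l₂
    refine ⟨l, h₁₁.trans hl₁, h₂₁.trans hl₂, ?_⟩
    have e₁ := hf₁ hl₁
    have e₂ := hf₂ hl₂
    have hg₂ := congrArg
      (fun t => HMap.comp t ((F.hmap μ).comp (𝓧.bond (h₂₂.trans hl₂)))) hg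
    simp only [HMap.comp_assoc] at hg₂ e₁ e₂ ⊢
    rw [← e₂, hg₂, ← e₁]

/-- Composition of pro-morphisms (via choice of representatives). -/
def ProMor.comp (g : ProMor 𝓨 𝓩) (f : ProMor 𝓧 𝓨) : ProMor 𝓧 𝓩 :=
  ProMor.mk ((Quot.out g).comp (Quot.out f))

/-- The identity pro-morphism. -/
protected def ProMor.id (𝓧 : InverseSystem.{u}) : ProMor 𝓧 𝓧 :=
  ProMor.mk (SysMor.identity 𝓧)

/-- `α` is an isomorphism of pro-HPol. -/
def ProMor.IsIso (α : ProMor 𝓧 𝓨) : Prop :=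
  ∃ β : ProMor 𝓨 𝓧, β.comp α = ProMor.id 𝓧 ∧ α.comp β = ProMor.id 𝓨

/-! ### Restriction to a cofinal subset -/

/-- The subsystem of `𝓨` determined by a cofinal subset `S` of the index set. -/
def InverseSystem.restrict (𝓨 : InverseSystem.{u}) (S : Set 𝓨.Idx)
    (hcof : ∀ μ : 𝓨.Idx, ∃ μ' ∈ S, μ ≤ μ') : InverseSystem.{u} where
  Idx := ↥S
  idxNonempty := by
    obtain ⟨μ⟩ := 𝓨.idxNonempty
    obtain ⟨μ', hs, -⟩ := hcof μ
    exact ⟨⟨μ', hs⟩⟩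
  directed a b := by
    obtain ⟨c, hac, hbc⟩ := 𝓨.directed a b
    obtain ⟨c', hs, hcc'⟩ := hcof c
    exact ⟨⟨c', hs⟩, Subtype.coe_le_coe.mp (le_trans hac hcc'),
      Subtype.coe_le_coe.mp (le_trans hbc hcc')⟩
  obj i := 𝓨.obj i
  topObj i := 𝓨.topObj i
  inHPol i := 𝓨.inHPol i
  bond h := 𝓨.bond h
  bond_refl i := 𝓨.bond_refl i
  bond_trans h₁ h₂ := 𝓨.bond_trans h₁ h₂

/-- The morphism induced by `F : 𝓧 → 𝓨` and the inclusion of a cofinal subset of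
the index set of `𝓨`. -/
def SysMor.restrict (F : SysMor 𝓧 𝓨) (S : Set 𝓨.Idx)
    (hcof : ∀ μ : 𝓨.Idx, ∃ μ' ∈ S, μ ≤ μ') : SysMor 𝓧 (𝓨.restrict S hcof) where
  idxMap μ := F.idxMap μ.val
  hmap μ := F.hmap μ.val
  coherent := by
    intro μ μ' h
    exact F.coherent h

/-! ### Expansions and shape dimension -/

/-- An `HPol`-expansion of the topological space `X`. -/
structure Expansion (X : Type u) [TopologicalSpace X] (𝓧 : InverseSystem.{u}) where
  /-- the projection H-maps `p_λ : X → X_λ` -/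
  proj : ∀ l : 𝓧.Idx, HMap X (𝓧.obj l)
  proj_bond : ∀ {l l' : 𝓧.Idx} (h : l ≤ l'), (𝓧.bond h).comp (proj l') = proj l
  /-- every H-map into a space of `HPol` factors through some term of the system -/
  factors : ∀ (P : Type u) [TopologicalSpace P], InHPol P → ∀ f : HMap X P,
    ∃ (l : 𝓧.Idx) (g : HMap (𝓧.obj l) P), g.comp (proj l) = f
  /-- the factorization is unique after passing to a larger index -/
  factors_unique : ∀ (P : Type u) [TopologicalSpace P], InHPol P →
    ∀ (l : 𝓧.Idx) (g g' : HMap (𝓧.obj l) P), g.comp (proj l) = g'.comp (proj l) →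
      ∃ (l' : 𝓧.Idx) (h : l ≤ l'), g.comp (𝓧.bond h) = g'.comp (𝓧.bond h)

/-- The shape dimension of a topological space is `≤ n`: `X` admits an
`HPol`-expansion all of whose terms are homotopy dominated by polyhedra of
dimension `≤ n`. -/
def ShapeDimLE (X : Type u) [TopologicalSpace X] (n : ℕ) : Prop :=
  ∃ (𝓧 : InverseSystem.{u}) (_ : Expansion X 𝓧), 𝓧.DimLE n

/-- The morphism of inverse systems `F` represents the H-map `f` with respect to the
expansions `pX` and `pY`, i.e. `q_μ ∘ f = f_μ ∘ p_{φ(μ)}` for all `μ`. -/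
def Represents {X Y : Type u} [TopologicalSpace X] [TopologicalSpace Y]
    {𝓧 𝓨 : InverseSystem.{u}} (pX : Expansion X 𝓧) (pY : Expansion Y 𝓨)
    (f : HMap X Y) (F : SysMor 𝓧 𝓨) : Prop :=
  ∀ μ : 𝓨.Idx, (F.hmap μ).comp (pX.proj (F.idxMap μ)) = (pY.proj μ).comp f

/-- The shape dimension of an H-map `f : X → Y` is `≤ n`: the shape morphism
induced by `f` admits a representation by a pro-morphism of dimension `≤ n`. -/
def HMapShapeDimLE {X Y : Type u} [TopologicalSpace X] [TopologicalSpace Y]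
    (f : HMap X Y) (n : ℕ) : Prop :=
  ∃ (𝓧 𝓨 : InverseSystem.{u}) (pX : Expansion X 𝓧) (pY : Expansion Y 𝓨)
    (F : SysMor 𝓧 𝓨), Represents pX pY f F ∧ (ProMor.mk F).DimLE n

/-- The shape dimension of a space, as an extended natural number. -/
def shapeDim (X : Type u) [TopologicalSpace X] : ℕ∞ :=
  sInf {n : ℕ∞ | ∃ m : ℕ, n = (m : ℕ∞) ∧ ShapeDimLE X m}

/-- The shape dimension of an H-map, as an extended natural number. -/
def hmapShapeDim {X Y : Type u} [TopologicalSpace X] [TopologicalSpace Y]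
    (f : HMap X Y) : ℕ∞ :=
  sInf {n : ℕ∞ | ∃ m : ℕ, n = (m : ℕ∞) ∧ HMapShapeDimLE f m}

end ShapePaper

namespace ShapePaper

/-! ### Auxiliary lemmas on equivalence of system morphisms -/

section EquivLemmas

variable {𝓧 𝓨 : InverseSystem.{u}}

theorem SysMor.equiv_refl (F : SysMor 𝓧 𝓨) : F.Equiv F :=
  fun μ => ⟨F.idxMap μ, le_refl _, le_refl _, rfl⟩

theorem SysMor.equiv_symm {F G : SysMor 𝓧 𝓨} (h : F.Equiv G) : G.Equiv F := by
  intro μ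
  obtain ⟨l, h₁, h₂, e⟩ := h μ
  exact ⟨l, h₂, h₁, e.symm⟩

theorem SysMor.equiv_trans {F G H : SysMor 𝓧 𝓨} (hfg : F.Equiv G) (hgh : G.Equiv H) :
    F.Equiv H := by
  intro μ
  obtain ⟨l₁, a₁, b₁, e₁⟩ := hfg μ
  obtain ⟨l₂, a₂, b₂, e₂⟩ := hgh μ
  obtain ⟨l, hl₁, hl₂⟩ := 𝓧.directed l₁ l₂
  refine ⟨l, a₁.trans hl₁, b₂.trans hl₂, ?_⟩
  have c₁ := congrArg (fun t => HMap.comp t (𝓧.bond hl₁)) e₁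
  have c₂ := congrArg (fun t => HMap.comp t (𝓧.bond hl₂)) e₂
  simp only [SysMor.shift_comp] at c₁ c₂
  exact c₁.trans c₂

theorem sysMorEquiv_equivalence : Equivalence (@SysMor.Equiv 𝓧 𝓨) :=
  ⟨SysMor.equiv_refl, SysMor.equiv_symm, SysMor.equiv_trans⟩

theorem SysMor.equiv_of_mk_eq {F G : SysMor 𝓧 𝓨} (h : ProMor.mk F = ProMor.mk G) :
    F.Equiv G :=
  (Equivalence.eqvGen_iff sysMorEquiv_equivalence).mp (Quot.eq.mp h)

end EquivLemmas

/-! ### The key factorization of bonding maps -/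

theorem bond_factors_of_left_inverse {𝓧 𝓨 : InverseSystem.{u}}
    (F : SysMor 𝓧 𝓨) (G : SysMor 𝓨 𝓧)
    (hinv : (ProMor.mk G).comp (ProMor.mk F) = ProMor.id 𝓧)
    (n : ℕ) (hF : (ProMor.mk F).DimLE n) :
    ∀ l : 𝓧.Idx, ∃ (l' : 𝓧.Idx) (h : l ≤ l'),
      (𝓧.bond h).FactorsThruPolyhedronDimLE n := by
  obtain ⟨F', hmk, hdim⟩ := hF
  set G₀ := Quot.out (ProMor.mk G) with hG₀
  set F₀ := Quot.out (ProMor.mk F) with hF₀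
  have hGF : (G₀.comp F₀).Equiv (SysMor.identity 𝓧) := by
    apply SysMor.equiv_of_mk_eq
    exact hinv
  have hF'F₀ : F'.Equiv F₀ := by
    apply SysMor.equiv_of_mk_eq
    rw [hF₀]
    exact hmk.trans (Quot.out_eq (ProMor.mk F)).symm
  intro l
  obtain ⟨l₁, hA, hB, e₀⟩ := hGF l
  set μ := G₀.idxMap l with hμ
  obtain ⟨l₂, hC, hD, e₁⟩ := hF'F₀ μ
  obtain ⟨l₃, hE, hfac⟩ := hdim μ
  obtain ⟨m, hm₁, hm₂⟩ := 𝓧.directed l₁ l₂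
  obtain ⟨t, ht₁, ht₂⟩ := 𝓧.directed m l₃
  have hl₁t : l₁ ≤ t := hm₁.trans ht₁
  have hl₂t : l₂ ≤ t := hm₂.trans ht₁
  have hBt : l ≤ t := le_trans hB hl₁t
  obtain ⟨P, tP, hPdim, u₀, v₀, hsplit⟩ := hfac
  refine ⟨t, hBt, P, tP, hPdim, u₀.comp (𝓧.bond ht₂), (G₀.hmap l).comp v₀, ?_⟩
  -- push e₀ up to t
  have e₀t := congrArg (fun g => HMap.comp g (𝓧.bond hl₁t)) e₀
  simp only [SysMor.shift_comp] at e₀t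
  -- e₀t : (G₀.comp F₀).shift l (hA.trans hl₁t) = (SysMor.identity 𝓧).shift l (hB.trans hl₁t)
  have hid : (SysMor.identity 𝓧).shift l (hB.trans hl₁t) = 𝓧.bond hBt := by
    show HMap.comp (HMap.id _) _ = _
    rw [HMap.id_comp]
    rfl
  have hGFshift : (G₀.comp F₀).shift l (hA.trans hl₁t)
      = (G₀.hmap l).comp (F₀.shift μ (hA.trans hl₁t)) := by
    show HMap.comp (HMap.comp _ _) _ = _
    exact HMap.comp_assoc _ _ _
  -- push e₁ up to t
  have e₁t := congrArg (fun g => HMap.comp g (𝓧.bond hl₂t)) e₁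
  simp only [SysMor.shift_comp] at e₁t
  -- e₁t : F'.shift μ (hC.trans hl₂t) = F₀.shift μ (hD.trans hl₂t)
  have hF'shift : F'.shift μ (hC.trans hl₂t)
      = ((v₀.comp u₀).comp (𝓧.bond ht₂)) := by
    have : F'.shift μ (hE.trans ht₂) = (F'.shift μ hE).comp (𝓧.bond ht₂) :=
      (SysMor.shift_comp F' μ hE ht₂).symm
    rw [hsplit] at this
    exact this
  calc 𝓧.bond hBt
      = (G₀.comp F₀).shift l (hA.trans hl₁t) := by rw [e₀t, hid]
    _ = (G₀.hmap l).comp (F₀.shift μ (hA.trans hl₁t)) := hGFshift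
    _ = (G₀.hmap l).comp (F'.shift μ (hC.trans hl₂t)) := by rw [e₁t]
    _ = (G₀.hmap l).comp ((v₀.comp u₀).comp (𝓧.bond ht₂)) := by rw [hF'shift]
    _ = ((G₀.hmap l).comp v₀).comp (u₀.comp (𝓧.bond ht₂)) := by
        rw [HMap.comp_assoc, HMap.comp_assoc]

/-! ### The construction of a small expansion from factorizations of bonds -/

section DominationConstruction

variable (𝓧 : InverseSystem.{u})

/-- The new index type: pairs of an old index and a natural number. -/
def NIdx : Type u := 𝓧.Idx × ULift.{u} ℕ

variable (s : 𝓧.Idx → 𝓧.Idx)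

/-- The order on the new index type. -/
def nle (x y : NIdx 𝓧) : Prop :=
  x = y ∨ (s x.1 ≤ y.1 ∧ x.2.down < y.2.down)

variable (hs : ∀ l, l ≤ s l)

include hs in
theorem nle_trans {x y z : NIdx 𝓧} (hxy : nle 𝓧 s x y) (hyz : nle 𝓧 s y z) :
    nle 𝓧 s x z := by
  rcases hxy with rfl | ⟨h₁, h₂⟩
  · exact hyz
  rcases hyz with rfl | ⟨h₃, h₄⟩
  · exact Or.inr ⟨h₁, h₂⟩
  exact Or.inr ⟨le_trans (le_trans h₁ (hs y.1)) h₃, Nat.lt_trans h₂ h₄⟩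

/-- The preorder on the new index type. -/
def nPre : Preorder (NIdx 𝓧) where
  le := nle 𝓧 s
  le_refl _ := Or.inl rfl
  le_trans _ _ _ h h' := nle_trans 𝓧 s hs h h'

variable {n : ℕ} (P : 𝓧.Idx → Type u) [tP : ∀ l, TopologicalSpace (P l)]
  (uu : ∀ l, HMap (𝓧.obj (s l)) (P l))
  (vv : ∀ l, HMap (P l) (𝓧.obj l))

attribute [local instance] Classical.propDecidable

/-- The bonding maps of the new system. -/
def domBond {x y : NIdx 𝓧} (h : nle 𝓧 s x y) : HMap (P y.1) (P x.1) :=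
  if heq : x = y then (match heq with | rfl => HMap.id (P x.1))
  else ((uu x.1).comp (𝓧.bond (h.resolve_left heq).1)).comp (vv y.1)

theorem domBond_refl {x : NIdx 𝓧} (h : nle 𝓧 s x x) :
    domBond 𝓧 s P uu vv h = HMap.id (P x.1) := by
  rw [domBond, dif_pos rfl]

theorem domBond_ne {x y : NIdx 𝓧} (h : nle 𝓧 s x y) (hne : x ≠ y) :
    domBond 𝓧 s P uu vv h
      = ((uu x.1).comp (𝓧.bond (h.resolve_left hne).1)).comp (vv y.1) := by
  rw [domBond, dif_neg hne]

variable (huv : ∀ l, 𝓧.bond (hs l) = (vv l).comp (uu l))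

include hs huv in
theorem domBond_trans {x y z : NIdx 𝓧} (hxy : nle 𝓧 s x y) (hyz : nle 𝓧 s y z)
    (hxz : nle 𝓧 s x z) :
    HMap.comp (domBond 𝓧 s P uu vv hxy) (domBond 𝓧 s P uu vv hyz)
      = domBond 𝓧 s P uu vv hxz := by
  by_cases h1 : x = y
  · subst h1
    rw [domBond_refl, HMap.id_comp]
  by_cases h2 : y = z
  · subst h2
    rw [domBond_refl 𝓧 s P uu vv hyz, HMap.comp_id]
  have h3 : x ≠ z := by
    rintro rfl
    exact absurd ((hyz.resolve_left h2).2) (Nat.lt_asymm ((hxy.resolve_left h1).2))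
  rw [domBond_ne 𝓧 s P uu vv hxy h1, domBond_ne 𝓧 s P uu vv hyz h2,
    domBond_ne 𝓧 s P uu vv hxz h3]
  simp only [HMap.comp_assoc]
  rw [← HMap.comp_assoc (vv y.1) (uu y.1), ← huv]
  congr 1
  rw [← HMap.comp_assoc, 𝓧.bond_trans, ← HMap.comp_assoc, 𝓧.bond_trans]

variable (hP : ∀ l, IsPolyhedronDimLE (P l) n)

/-- The new inverse system, with terms the dominating polyhedra. -/
def domSystem : InverseSystem.{u} where
  Idx := NIdx 𝓧
  preorder := nPre 𝓧 s hs
  idxNonempty := ⟨(Classical.arbitrary _, ⟨0⟩)⟩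
  directed a b := by
    obtain ⟨c, hc₁, hc₂⟩ := 𝓧.directed (s a.1) (s b.1)
    refine ⟨(c, ⟨max a.2.down b.2.down + 1⟩), Or.inr ⟨hc₁, ?_⟩, Or.inr ⟨hc₂, ?_⟩⟩
    · exact Nat.lt_succ_of_le (le_max_left _ _)
    · exact Nat.lt_succ_of_le (le_max_right _ _)
  obj x := P x.1
  topObj x := tP x.1
  inHPol x := by
    obtain ⟨R, -⟩ := hP x.1
    exact ⟨P x.1, tP x.1, ⟨R⟩, ⟨ContinuousMap.HomotopyEquiv.refl _⟩⟩
  bond h := domBond 𝓧 s P uu vv h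
  bond_refl x := domBond_refl 𝓧 s P uu vv _
  bond_trans hij hjk := domBond_trans 𝓧 s hs P uu vv huv hij hjk _

theorem domSystem_dimLE : (domSystem 𝓧 s hs P uu vv huv hP).DimLE n := by
  intro x
  exact ⟨P x.1, tP x.1, hP x.1, HMap.id _, HMap.id _, HMap.id_comp _⟩

variable {X : Type u} [TopologicalSpace X] (pX : Expansion X 𝓧)

/-- The expansion of `X` over the new system. -/
def domExpansion : Expansion X (domSystem 𝓧 s hs P uu vv huv hP) where
  proj x := (uu x.1).comp (pX.proj (s x.1))
  proj_bond {a b} h := by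
    show HMap.comp (domBond 𝓧 s P uu vv h) _ = _
    by_cases heq : a = b
    · subst heq
      exact (congrArg (fun t => HMap.comp t _) (domBond_refl 𝓧 s P uu vv h)).trans (HMap.id_comp _)
    · rw [domBond_ne 𝓧 s P uu vv h heq]
      have h₁ : s a.1 ≤ b.1 := (h.resolve_left heq).1
      calc HMap.comp (((uu a.1).comp (𝓧.bond h₁)).comp (vv b.1))
            ((uu b.1).comp (pX.proj (s b.1)))
          = (uu a.1).comp ((𝓧.bond h₁).comp
              (((vv b.1).comp (uu b.1)).comp (pX.proj (s b.1)))) := by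
            simp only [HMap.comp_assoc]
        _ = (uu a.1).comp ((𝓧.bond h₁).comp
              ((𝓧.bond (hs b.1)).comp (pX.proj (s b.1)))) := by rw [← huv]
        _ = (uu a.1).comp ((𝓧.bond h₁).comp (pX.proj b.1)) := by rw [pX.proj_bond]
        _ = (uu a.1).comp (pX.proj (s a.1)) := by rw [pX.proj_bond]
  factors Q _ hQ f := by
    obtain ⟨l, g, hg⟩ := pX.factors Q hQ f
    refine ⟨(l, ⟨0⟩), (g.comp (vv l) : HMap (P l) Q), ?_⟩
    show HMap.comp (g.comp (vv l)) ((uu l).comp (pX.proj (s l))) = f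
    calc HMap.comp (g.comp (vv l)) ((uu l).comp (pX.proj (s l)))
        = g.comp (((vv l).comp (uu l)).comp (pX.proj (s l))) := by
          simp only [HMap.comp_assoc]
      _ = g.comp ((𝓧.bond (hs l)).comp (pX.proj (s l))) := by rw [← huv]
      _ = g.comp (pX.proj l) := by rw [pX.proj_bond]
      _ = f := hg
  factors_unique Q _ hQ a g g' hgg' := by
    have hgg'' : (g.comp (uu a.1)).comp (pX.proj (s a.1))
        = (g'.comp (uu a.1)).comp (pX.proj (s a.1)) := by
      exact (HMap.comp_assoc _ _ _).trans (hgg'.trans (HMap.comp_assoc _ _ _).symm)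
    obtain ⟨l', hl', he⟩ := pX.factors_unique Q hQ (s a.1) (g.comp (uu a.1))
      (g'.comp (uu a.1)) hgg''
    have hne : a ≠ (l', ⟨a.2.down + 1⟩) := by
      intro hcontra
      have : a.2.down = a.2.down + 1 := congrArg (fun t => t.2.down) hcontra
      omega
    have hle : nle 𝓧 s a (l', ⟨a.2.down + 1⟩) :=
      Or.inr ⟨hl', Nat.lt_succ_self _⟩
    refine ⟨(l', ⟨a.2.down + 1⟩), hle, ?_⟩
    show HMap.comp g (domBond 𝓧 s P uu vv hle) = HMap.comp g' (domBond 𝓧 s P uu vv hle)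
    rw [domBond_ne 𝓧 s P uu vv hle hne]
    have h₁ : s a.1 ≤ l' := (hle.resolve_left hne).1
    calc HMap.comp g (((uu a.1).comp (𝓧.bond h₁)).comp (vv l'))
        = ((g.comp (uu a.1)).comp (𝓧.bond h₁)).comp (vv l') := by
          simp only [HMap.comp_assoc]
          exact (HMap.comp_assoc _ _ _).symm
      _ = ((g'.comp (uu a.1)).comp (𝓧.bond h₁)).comp (vv l') := by rw [he]
      _ = HMap.comp g' (((uu a.1).comp (𝓧.bond h₁)).comp (vv l')) := by
          simp only [HMap.comp_assoc]
          exact HMap.comp_assoc _ _ _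

end DominationConstruction

/-- If every bonding map of an expansion of `X` factors (after passing to a larger
index) through a polyhedron of dimension `≤ n`, then `sd X ≤ n`. -/
theorem shapeDimLE_of_bond_factors (X : Type u) [TopologicalSpace X]
    (𝓧 : InverseSystem.{u}) (pX : Expansion X 𝓧) (n : ℕ)
    (H : ∀ l : 𝓧.Idx, ∃ (l' : 𝓧.Idx) (h : l ≤ l'),
      (𝓧.bond h).FactorsThruPolyhedronDimLE n) : ShapeDimLE X n := by
  choose s hs P tP hP uu vv huv using H
  exact ⟨domSystem 𝓧 s hs P (tP := tP) uu vv huv hP,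
    domExpansion 𝓧 s hs P (tP := tP) uu vv huv hP pX,
    domSystem_dimLE 𝓧 s hs P (tP := tP) uu vv huv hP⟩

/-- **Theorem 2.18.** Let `F : X → Y` be a shape morphism of topological spaces (given,
with respect to HPol-expansions of `X` and `Y`, by a morphism of inverse systems `F`)
which has a left inverse `G : Y → X`, i.e. `G ∘ F = 1_X`.  If `sd F ≤ n` then
`sd X ≤ n`. -/
theorem shapeDimLE_of_left_inverse (X Y : Type u)
    [TopologicalSpace X] [TopologicalSpace Y]
    (𝓧 𝓨 : InverseSystem.{u}) (pX : Expansion X 𝓧) (pY : Expansion Y 𝓨)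
    (F : SysMor 𝓧 𝓨) (G : SysMor 𝓨 𝓧)
    (hinv : (ProMor.mk G).comp (ProMor.mk F) = ProMor.id 𝓧)
    (n : ℕ) (hF : (ProMor.mk F).DimLE n) : ShapeDimLE X n := by
  exact shapeDimLE_of_bond_factors X 𝓧 pX n
    (bond_factors_of_left_inverse F G hinv n hF)

end ShapePaper
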